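/- arXiv:1201.1841 — 2 statements merged into one kernel-verified Lean document; each statement's English description precedes it below -/
import Mathlib

section
/- Let R(v) = √(h(v,v)) + β(v) be a Randers function with ‖β‖_h < 1, and for v ≠ 0 define g_v(w,w) = (R(v)/√(h(v,v))) · h(w,w) + (h(v,w)/√(h(v,v)) + β(w))². Then for every v ≠ 0, the quadratic form w ↦ g_v(w,w) is positive definite. -/
/-- The fundamental tensor of a Randers metric with ‖β‖_h < 1 is positive definite. -/
theorem randers_fundamental_tensor_posdef
    {V : Type*} [AddCommGroup V] [Module ℝ V] [FiniteDimensional ℝ V]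
    (h : V →ₗ[ℝ] V →ₗ[ℝ] ℝ)
    (hsymm : ∀ v w : V, h v w = h w v)
    (hpos : ∀ v : V, v ≠ 0 → 0 < h v v)
    (β : V →ₗ[ℝ] ℝ)
    (hβ : sSup {r : ℝ | ∃ v : V, v ≠ 0 ∧ r = |β v| / Real.sqrt (h v v)} < 1) :
    ∀ v : V, v ≠ 0 → ∀ w : V, w ≠ 0 →
      0 < ((Real.sqrt (h v v) + β v) / Real.sqrt (h v v)) * h w w +
            (h v w / Real.sqrt (h v v) + β w) ^ 2 := by
  -- h is nonnegative
  have hnn : ∀ u : V, 0 ≤ h u u := by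
    intro u
    by_cases hu : u = 0
    · simp [hu]
    · exact (hpos u hu).le
  -- Cauchy–Schwarz for h
  have cs : ∀ u w : V, (h u w) ^ 2 ≤ h u u * h w w := by
    intro u w
    have key : ∀ t : ℝ, 0 ≤ h w w * (t * t) + (2 * h u w) * t + h u u := by
      intro t
      have := hnn (u + t • w)
      have expand : h (u + t • w) (u + t • w)
          = h w w * (t * t) + (2 * h u w) * t + h u u := by
        simp only [map_add, map_smul, LinearMap.add_apply, LinearMap.smul_apply,
          smul_eq_mul]
        rw [hsymm w u]
        ring
      linarith [expand ▸ this]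
    have hd := discrim_le_zero key
    unfold discrim at hd
    nlinarith [hd]
  -- Riesz representation: β = h b for some b
  have hinj : Function.Injective (h : V →ₗ[ℝ] Module.Dual ℝ V) := by
    rw [← LinearMap.ker_eq_bot, LinearMap.ker_eq_bot']
    intro m hm
    by_contra hm0
    have := hpos m hm0
    rw [hm] at this
    simp at this
  have hsurj : Function.Surjective (h : V →ₗ[ℝ] Module.Dual ℝ V) := by
    rw [← LinearMap.injective_iff_surjective_of_finrank_eq_finrank
      Subspace.dual_finrank_eq.symm]
    exact hinj
  obtain ⟨b, hb⟩ := hsurj β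
  -- bound on the set
  have hbd : ∀ u : V, u ≠ 0 → |β u| / Real.sqrt (h u u) ≤ Real.sqrt (h b b) := by
    intro u hu
    have hsq : (β u) ^ 2 ≤ h b b * h u u := by
      rw [← hb]; exact cs b u
    have h1 : |β u| ≤ Real.sqrt (h b b) * Real.sqrt (h u u) := by
      rw [← Real.sqrt_mul_self (abs_nonneg (β u)), ← Real.sqrt_mul (hnn b)]
      apply Real.sqrt_le_sqrt
      nlinarith [sq_abs (β u)]
    rw [div_le_iff₀ (Real.sqrt_pos.mpr (hpos u hu))]
    exact h1
  intro v hv w hw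
  set s := Real.sqrt (h v v) with hs
  have hspos : 0 < s := Real.sqrt_pos.mpr (hpos v hv)
  -- |β v| / s ≤ sSup < 1
  have hmem : |β v| / s ∈ {r : ℝ | ∃ u : V, u ≠ 0 ∧ r = |β u| / Real.sqrt (h u u)} :=
    ⟨v, hv, rfl⟩
  have hle : |β v| / s ≤ sSup {r : ℝ | ∃ u : V, u ≠ 0 ∧ r = |β u| / Real.sqrt (h u u)} := by
    apply le_csSup
    · exact ⟨Real.sqrt (h b b), fun r ⟨u, hu, hr⟩ => hr ▸ hbd u hu⟩
    · exact hmem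
  have hlt : |β v| / s < 1 := lt_of_le_of_lt hle hβ
  have habs : |β v| < s := (div_lt_one hspos).mp hlt
  have hβv : -s < β v := by
    have := neg_abs_le (β v)
    linarith
  have hfirst : 0 < ((s + β v) / s) * h w w :=
    mul_pos (div_pos (by linarith) hspos) (hpos w hw)
  have hsecond : 0 ≤ (h v w / s + β w) ^ 2 := sq_nonneg _
  linarith
end

section
/- Let q(v,τ) = g₀(v,v) + 2ω(v)τ − τ² be a normalized standard stationary quadratic form on V × ℝ and f a linear functional on V (the differential at a point of a function defining a section). The graph subspace {(v, f(v)) : v ∈ V} is spacelike (i.e., q(v, f(v)) > 0 for all v ≠ 0) if and only if F(v) > f(v) for all v ≠ 0, where F(v) = √(g₀(v,v) + ω(v)²) + ω(v). -/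
/-- The graph of a linear functional f is spacelike for the stationary quadratic form
iff F(v) > f(v) for all v ≠ 0, where F is the Fermat metric. -/
theorem graph_spacelike_iff_fermat_gt
    {V : Type*} [AddCommGroup V] [Module ℝ V] [FiniteDimensional ℝ V]
    (g₀ : V →ₗ[ℝ] V →ₗ[ℝ] ℝ)
    (hsymm : ∀ v w : V, g₀ v w = g₀ w v)
    (hpos : ∀ v : V, v ≠ 0 → 0 < g₀ v v)
    (ω f : V →ₗ[ℝ] ℝ) :
    (∀ v : V, v ≠ 0 → 0 < g₀ v v + 2 * ω v * f v - (f v) ^ 2) ↔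
      (∀ v : V, v ≠ 0 → f v < Real.sqrt (g₀ v v + (ω v) ^ 2) + ω v) := by
  constructor
  · intro h v hv
    have ha : 0 < g₀ v v := hpos v hv
    have hq := h v hv
    have hs : 0 ≤ g₀ v v + (ω v) ^ 2 := by positivity
    have hsq : (f v - ω v) ^ 2 < g₀ v v + (ω v) ^ 2 := by nlinarith
    have h1 : f v - ω v < Real.sqrt (g₀ v v + (ω v) ^ 2) := by
      have := Real.sqrt_lt_sqrt (by positivity) hsq
      calc f v - ω v ≤ |f v - ω v| := le_abs_self _
        _ = Real.sqrt ((f v - ω v) ^ 2) := (Real.sqrt_sq_eq_abs _).symm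
        _ < Real.sqrt (g₀ v v + (ω v) ^ 2) := this
    linarith
  · intro h v hv
    have ha : 0 < g₀ v v := hpos v hv
    have h1 := h v hv
    have h2 := h (-v) (neg_ne_zero.mpr hv)
    simp only [map_neg, LinearMap.neg_apply, neg_neg] at h2
    have hsq : Real.sqrt (g₀ v v + (ω v) ^ 2) ^ 2 = g₀ v v + (ω v) ^ 2 := by
      rw [Real.sq_sqrt]; positivity
    have h2' : f v < Real.sqrt (g₀ v v + (-ω v) ^ 2) + ω v ∨ True := Or.inr trivial
    have hnegsq : (-(ω v)) ^ 2 = (ω v) ^ 2 := by ring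
    rw [hnegsq] at h2
    -- h2 : -f v < sqrt (g₀ v v + ω v ^2) + -ω v  (hopefully)
    set s := Real.sqrt (g₀ v v + (ω v) ^ 2) with hsdef
    have hb : |f v - ω v| < s := by
      rw [abs_lt]; constructor <;> linarith
    obtain ⟨hl, hr⟩ := abs_lt.mp hb
    have : (f v - ω v) ^ 2 < s ^ 2 := sq_lt_sq' hl hr
    nlinarith [hsq]
end
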